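/- On ℝ^6 with standard inner product, standard orthonormal basis e_1, …, e_6, and standard complex structure J₀ (J₀e₁ = e₂, J₀e₂ = −e₁, J₀e₃ = e₄, J₀e₄ = −e₃, J₀e₅ = e₆, J₀e₆ = −e₅), let Re Ω₀ = e^{135} − e^{146} − e^{236} − e^{245}. If h is a symmetric bilinear form on ℝ^6 that is J₀-anti-invariant (h(J₀v, J₀w) = −h(v, w)) and satisfies h_*(Re Ω₀) = 0, then h = 0. That is, h ↦ h_*(Re Ω₀) is injective on the space Sym²₁₂ of J₀-anti-invariant symmetric bilinear forms. -/

import Mathlib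

noncomputable section

/-- The `i`-th standard basis vector of `ℝ^6`. -/
def sb (i : Fin 6) : EuclideanSpace ℝ (Fin 6) := EuclideanSpace.single i (1 : ℝ)

/-- The basic alternating 2-form `e^i ∧ e^j` on `ℝ^6` (determinant convention). -/
def form2 (i j : Fin 6) : (Fin 2 → EuclideanSpace ℝ (Fin 6)) → ℝ :=
  fun v => v 0 i * v 1 j - v 0 j * v 1 i

/-- The basic alternating 3-form `e^i ∧ e^j ∧ e^k` on `ℝ^6` (determinant convention). -/
def form3 (i j k : Fin 6) : (Fin 3 → EuclideanSpace ℝ (Fin 6)) → ℝ :=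
  fun v => Matrix.det !![v 0 i, v 0 j, v 0 k; v 1 i, v 1 j, v 1 k; v 2 i, v 2 j, v 2 k]

/-- The standard 2-form `ω₀ = e^{12} + e^{34} + e^{56}` (indices shifted to `0,…,5`). -/
def omega0 : (Fin 2 → EuclideanSpace ℝ (Fin 6)) → ℝ :=
  fun v => form2 0 1 v + form2 2 3 v + form2 4 5 v

/-- `Re Ω₀ = e^{135} − e^{146} − e^{236} − e^{245}` (indices shifted to `0,…,5`). -/
def reOmega0 : (Fin 3 → EuclideanSpace ℝ (Fin 6)) → ℝ :=
  fun v => form3 0 2 4 v - form3 0 3 5 v - form3 1 2 5 v - form3 1 3 4 v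

/-- The standard complex structure `J₀` on `ℝ^6`:
`J₀e₁ = e₂, J₀e₂ = −e₁, J₀e₃ = e₄, J₀e₄ = −e₃, J₀e₅ = e₆, J₀e₆ = −e₅`. -/
def J0 : EuclideanSpace ℝ (Fin 6) → EuclideanSpace ℝ (Fin 6) := fun v =>
  EuclideanSpace.single 0 (-(v 1)) + EuclideanSpace.single 1 (v 0) +
    EuclideanSpace.single 2 (-(v 3)) + EuclideanSpace.single 3 (v 2) +
    EuclideanSpace.single 4 (-(v 5)) + EuclideanSpace.single 5 (v 4)

/-- The pointwise value of the wedge product `α ∧ κ` of a 1-form `α` with a `k`-form `κ`. -/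
def wedge1 {E : Type*} [AddCommGroup E] [Module ℝ E] {k : ℕ}
    (α : E → ℝ) (κ : (Fin k → E) → ℝ) : (Fin (k + 1) → E) → ℝ :=
  fun v => ∑ i : Fin (k + 1), (-1 : ℝ) ^ (i : ℕ) * α (v i) * κ (fun j => v (i.succAbove j))

/-- The interior product `ι_x κ`: insertion of `x` into the first argument. -/
def ins {E : Type*} [AddCommGroup E] [Module ℝ E] {k : ℕ}
    (x : E) (κ : (Fin (k + 1) → E) → ℝ) : (Fin k → E) → ℝ :=
  fun v => κ (Fin.cons x v)

/-- `h_*κ := -∑ j, h(e_j, ·) ∧ ι_{e_j} κ`, computed in the basis `e`. -/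
def hStar {E : Type*} [AddCommGroup E] [Module ℝ E] {n k : ℕ}
    (e : Fin n → E) (h : E → E → ℝ) (κ : (Fin (k + 1) → E) → ℝ) : (Fin (k + 1) → E) → ℝ :=
  fun v => -∑ j : Fin n, wedge1 (fun w => h (e j) w) (ins (e j) κ) v


lemma cons_pair {E : Type*} (x u v : E) : Fin.cons x ![u, v] = ![x, u, v] := by
  funext i; fin_cases i <;> rfl

lemma succAbove0 {E : Type*} (a b c : E) :
    (fun j => ![a, b, c] ((0 : Fin 3).succAbove j)) = ![b, c] := by
  funext j; fin_cases j <;> rfl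

lemma succAbove1 {E : Type*} (a b c : E) :
    (fun j => ![a, b, c] ((1 : Fin 3).succAbove j)) = ![a, c] := by
  funext j; fin_cases j <;> rfl

lemma succAbove2 {E : Type*} (a b c : E) :
    (fun j => ![a, b, c] ((2 : Fin 3).succAbove j)) = ![a, b] := by
  funext j; fin_cases j <;> rfl

lemma hStar_three {E : Type*} [AddCommGroup E] [Module ℝ E] {n : ℕ}
    (e : Fin n → E) (h : E → E → ℝ) (κ : (Fin 3 → E) → ℝ) (a b c : E) :
    hStar e h κ ![a, b, c] =
      -∑ j : Fin n, (h (e j) a * κ ![e j, b, c] - h (e j) b * κ ![e j, a, c]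
        + h (e j) c * κ ![e j, a, b]) := by
  unfold hStar wedge1 ins
  congr 1
  refine Finset.sum_congr rfl fun j _ => ?_
  rw [Fin.sum_univ_three]
  rw [succAbove0, succAbove1, succAbove2, cons_pair, cons_pair, cons_pair]
  show (-1 : ℝ) ^ (0 : ℕ) * _ * _ + (-1 : ℝ) ^ (1 : ℕ) * _ * _
      + (-1 : ℝ) ^ (2 : ℕ) * _ * _ = _
  norm_num
  rw [show (![a, b, c] 2 : E) = c from rfl]
  ring

lemma J0sb0 : J0 (sb 0) = sb 1 := by
  ext k; fin_cases k <;> simp [J0, sb, EuclideanSpace.single_apply, PiLp.add_apply]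
lemma J0sb2 : J0 (sb 2) = sb 3 := by
  ext k; fin_cases k <;> simp [J0, sb, EuclideanSpace.single_apply, PiLp.add_apply]
lemma J0sb3 : J0 (sb 3) = -sb 2 := by
  ext k; fin_cases k <;>
    simp [J0, sb, EuclideanSpace.single_apply, PiLp.add_apply, PiLp.neg_apply]
lemma J0sb4 : J0 (sb 4) = sb 5 := by
  ext k; fin_cases k <;> simp [J0, sb, EuclideanSpace.single_apply, PiLp.add_apply]
lemma J0sb5 : J0 (sb 5) = -sb 4 := by
  ext k; fin_cases k <;>
    simp [J0, sb, EuclideanSpace.single_apply, PiLp.add_apply, PiLp.neg_apply]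

set_option maxHeartbeats 4000000 in
/-- If `h` is a symmetric bilinear form on `ℝ^6` that is `J₀`-anti-invariant
(`h(J₀v, J₀w) = −h(v, w)`) and satisfies `h_*(Re Ω₀) = 0`, then `h = 0`: the map
`h ↦ h_*(Re Ω₀)` is injective on `Sym²₁₂`. -/
theorem statement9
    (h : EuclideanSpace ℝ (Fin 6) →ₗ[ℝ] EuclideanSpace ℝ (Fin 6) →ₗ[ℝ] ℝ)
    (hsymm : ∀ v w, h v w = h w v)
    (hanti : ∀ v w, h (J0 v) (J0 w) = -h v w)
    (hvan : hStar sb (fun a b => h a b) reOmega0 = 0) :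
    h = 0 := by
  have ev012 := congrFun hvan ![sb 0, sb 1, sb 2]
  rw [hStar_three] at ev012
  simp [reOmega0, form3, sb, Fin.sum_univ_six, Matrix.det_fin_three,
    EuclideanSpace.single_apply, Matrix.vecHead, Matrix.vecTail] at ev012
  have ev013 := congrFun hvan ![sb 0, sb 1, sb 3]
  rw [hStar_three] at ev013
  simp [reOmega0, form3, sb, Fin.sum_univ_six, Matrix.det_fin_three,
    EuclideanSpace.single_apply, Matrix.vecHead, Matrix.vecTail] at ev013
  have ev014 := congrFun hvan ![sb 0, sb 1, sb 4]
  rw [hStar_three] at ev014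
  simp [reOmega0, form3, sb, Fin.sum_univ_six, Matrix.det_fin_three,
    EuclideanSpace.single_apply, Matrix.vecHead, Matrix.vecTail] at ev014
  have ev015 := congrFun hvan ![sb 0, sb 1, sb 5]
  rw [hStar_three] at ev015
  simp [reOmega0, form3, sb, Fin.sum_univ_six, Matrix.det_fin_three,
    EuclideanSpace.single_apply, Matrix.vecHead, Matrix.vecTail] at ev015
  have ev023 := congrFun hvan ![sb 0, sb 2, sb 3]
  rw [hStar_three] at ev023
  simp [reOmega0, form3, sb, Fin.sum_univ_six, Matrix.det_fin_three,
    EuclideanSpace.single_apply, Matrix.vecHead, Matrix.vecTail] at ev023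
  have ev024 := congrFun hvan ![sb 0, sb 2, sb 4]
  rw [hStar_three] at ev024
  simp [reOmega0, form3, sb, Fin.sum_univ_six, Matrix.det_fin_three,
    EuclideanSpace.single_apply, Matrix.vecHead, Matrix.vecTail] at ev024
  have ev025 := congrFun hvan ![sb 0, sb 2, sb 5]
  rw [hStar_three] at ev025
  simp [reOmega0, form3, sb, Fin.sum_univ_six, Matrix.det_fin_three,
    EuclideanSpace.single_apply, Matrix.vecHead, Matrix.vecTail] at ev025
  have ev034 := congrFun hvan ![sb 0, sb 3, sb 4]
  rw [hStar_three] at ev034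
  simp [reOmega0, form3, sb, Fin.sum_univ_six, Matrix.det_fin_three,
    EuclideanSpace.single_apply, Matrix.vecHead, Matrix.vecTail] at ev034
  have ev035 := congrFun hvan ![sb 0, sb 3, sb 5]
  rw [hStar_three] at ev035
  simp [reOmega0, form3, sb, Fin.sum_univ_six, Matrix.det_fin_three,
    EuclideanSpace.single_apply, Matrix.vecHead, Matrix.vecTail] at ev035
  have ev045 := congrFun hvan ![sb 0, sb 4, sb 5]
  rw [hStar_three] at ev045
  simp [reOmega0, form3, sb, Fin.sum_univ_six, Matrix.det_fin_three,
    EuclideanSpace.single_apply, Matrix.vecHead, Matrix.vecTail] at ev045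
  have ev123 := congrFun hvan ![sb 1, sb 2, sb 3]
  rw [hStar_three] at ev123
  simp [reOmega0, form3, sb, Fin.sum_univ_six, Matrix.det_fin_three,
    EuclideanSpace.single_apply, Matrix.vecHead, Matrix.vecTail] at ev123
  have ev124 := congrFun hvan ![sb 1, sb 2, sb 4]
  rw [hStar_three] at ev124
  simp [reOmega0, form3, sb, Fin.sum_univ_six, Matrix.det_fin_three,
    EuclideanSpace.single_apply, Matrix.vecHead, Matrix.vecTail] at ev124
  have ev125 := congrFun hvan ![sb 1, sb 2, sb 5]
  rw [hStar_three] at ev125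
  simp [reOmega0, form3, sb, Fin.sum_univ_six, Matrix.det_fin_three,
    EuclideanSpace.single_apply, Matrix.vecHead, Matrix.vecTail] at ev125
  have ev134 := congrFun hvan ![sb 1, sb 3, sb 4]
  rw [hStar_three] at ev134
  simp [reOmega0, form3, sb, Fin.sum_univ_six, Matrix.det_fin_three,
    EuclideanSpace.single_apply, Matrix.vecHead, Matrix.vecTail] at ev134
  have ev135 := congrFun hvan ![sb 1, sb 3, sb 5]
  rw [hStar_three] at ev135
  simp [reOmega0, form3, sb, Fin.sum_univ_six, Matrix.det_fin_three,
    EuclideanSpace.single_apply, Matrix.vecHead, Matrix.vecTail] at ev135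
  have ev145 := congrFun hvan ![sb 1, sb 4, sb 5]
  rw [hStar_three] at ev145
  simp [reOmega0, form3, sb, Fin.sum_univ_six, Matrix.det_fin_three,
    EuclideanSpace.single_apply, Matrix.vecHead, Matrix.vecTail] at ev145
  have ev234 := congrFun hvan ![sb 2, sb 3, sb 4]
  rw [hStar_three] at ev234
  simp [reOmega0, form3, sb, Fin.sum_univ_six, Matrix.det_fin_three,
    EuclideanSpace.single_apply, Matrix.vecHead, Matrix.vecTail] at ev234
  have ev235 := congrFun hvan ![sb 2, sb 3, sb 5]
  rw [hStar_three] at ev235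
  simp [reOmega0, form3, sb, Fin.sum_univ_six, Matrix.det_fin_three,
    EuclideanSpace.single_apply, Matrix.vecHead, Matrix.vecTail] at ev235
  have ev245 := congrFun hvan ![sb 2, sb 4, sb 5]
  rw [hStar_three] at ev245
  simp [reOmega0, form3, sb, Fin.sum_univ_six, Matrix.det_fin_three,
    EuclideanSpace.single_apply, Matrix.vecHead, Matrix.vecTail] at ev245
  have ev345 := congrFun hvan ![sb 3, sb 4, sb 5]
  rw [hStar_three] at ev345
  simp [reOmega0, form3, sb, Fin.sum_univ_six, Matrix.det_fin_three,
    EuclideanSpace.single_apply, Matrix.vecHead, Matrix.vecTail] at ev345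
  have a00 : h (EuclideanSpace.single 1 1) (EuclideanSpace.single 1 1) = -(h (EuclideanSpace.single 0 1) (EuclideanSpace.single 0 1)) := by
    have t := hanti (sb 0) (sb 0); rw [J0sb0] at t; exact t
  have a02 : h (EuclideanSpace.single 1 1) (EuclideanSpace.single 3 1) = -(h (EuclideanSpace.single 0 1) (EuclideanSpace.single 2 1)) := by
    have t := hanti (sb 0) (sb 2); rw [J0sb0, J0sb2] at t; exact t
  have a03 : h (EuclideanSpace.single 1 1) (EuclideanSpace.single 2 1) = h (EuclideanSpace.single 0 1) (EuclideanSpace.single 3 1) := by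
    have t := hanti (sb 0) (sb 3); rw [J0sb0, J0sb3, map_neg, neg_inj] at t; exact t
  have a04 : h (EuclideanSpace.single 1 1) (EuclideanSpace.single 5 1) = -(h (EuclideanSpace.single 0 1) (EuclideanSpace.single 4 1)) := by
    have t := hanti (sb 0) (sb 4); rw [J0sb0, J0sb4] at t; exact t
  have a05 : h (EuclideanSpace.single 1 1) (EuclideanSpace.single 4 1) = h (EuclideanSpace.single 0 1) (EuclideanSpace.single 5 1) := by
    have t := hanti (sb 0) (sb 5); rw [J0sb0, J0sb5, map_neg, neg_inj] at t; exact t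
  have a22 : h (EuclideanSpace.single 3 1) (EuclideanSpace.single 3 1) = -(h (EuclideanSpace.single 2 1) (EuclideanSpace.single 2 1)) := by
    have t := hanti (sb 2) (sb 2); rw [J0sb2] at t; exact t
  have a24 : h (EuclideanSpace.single 3 1) (EuclideanSpace.single 5 1) = -(h (EuclideanSpace.single 2 1) (EuclideanSpace.single 4 1)) := by
    have t := hanti (sb 2) (sb 4); rw [J0sb2, J0sb4] at t; exact t
  have a25 : h (EuclideanSpace.single 3 1) (EuclideanSpace.single 4 1) = h (EuclideanSpace.single 2 1) (EuclideanSpace.single 5 1) := by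
    have t := hanti (sb 2) (sb 5); rw [J0sb2, J0sb5, map_neg, neg_inj] at t; exact t
  have a44 : h (EuclideanSpace.single 5 1) (EuclideanSpace.single 5 1) = -(h (EuclideanSpace.single 4 1) (EuclideanSpace.single 4 1)) := by
    have t := hanti (sb 4) (sb 4); rw [J0sb4] at t; exact t
  have s01 : h (EuclideanSpace.single 0 1) (EuclideanSpace.single 1 1) = h (EuclideanSpace.single 1 1) (EuclideanSpace.single 0 1) := hsymm _ _
  have s02 : h (EuclideanSpace.single 0 1) (EuclideanSpace.single 2 1) = h (EuclideanSpace.single 2 1) (EuclideanSpace.single 0 1) := hsymm _ _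
  have s03 : h (EuclideanSpace.single 0 1) (EuclideanSpace.single 3 1) = h (EuclideanSpace.single 3 1) (EuclideanSpace.single 0 1) := hsymm _ _
  have s04 : h (EuclideanSpace.single 0 1) (EuclideanSpace.single 4 1) = h (EuclideanSpace.single 4 1) (EuclideanSpace.single 0 1) := hsymm _ _
  have s05 : h (EuclideanSpace.single 0 1) (EuclideanSpace.single 5 1) = h (EuclideanSpace.single 5 1) (EuclideanSpace.single 0 1) := hsymm _ _
  have s12 : h (EuclideanSpace.single 1 1) (EuclideanSpace.single 2 1) = h (EuclideanSpace.single 2 1) (EuclideanSpace.single 1 1) := hsymm _ _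
  have s13 : h (EuclideanSpace.single 1 1) (EuclideanSpace.single 3 1) = h (EuclideanSpace.single 3 1) (EuclideanSpace.single 1 1) := hsymm _ _
  have s14 : h (EuclideanSpace.single 1 1) (EuclideanSpace.single 4 1) = h (EuclideanSpace.single 4 1) (EuclideanSpace.single 1 1) := hsymm _ _
  have s15 : h (EuclideanSpace.single 1 1) (EuclideanSpace.single 5 1) = h (EuclideanSpace.single 5 1) (EuclideanSpace.single 1 1) := hsymm _ _
  have s23 : h (EuclideanSpace.single 2 1) (EuclideanSpace.single 3 1) = h (EuclideanSpace.single 3 1) (EuclideanSpace.single 2 1) := hsymm _ _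
  have s24 : h (EuclideanSpace.single 2 1) (EuclideanSpace.single 4 1) = h (EuclideanSpace.single 4 1) (EuclideanSpace.single 2 1) := hsymm _ _
  have s25 : h (EuclideanSpace.single 2 1) (EuclideanSpace.single 5 1) = h (EuclideanSpace.single 5 1) (EuclideanSpace.single 2 1) := hsymm _ _
  have s34 : h (EuclideanSpace.single 3 1) (EuclideanSpace.single 4 1) = h (EuclideanSpace.single 4 1) (EuclideanSpace.single 3 1) := hsymm _ _
  have s35 : h (EuclideanSpace.single 3 1) (EuclideanSpace.single 5 1) = h (EuclideanSpace.single 5 1) (EuclideanSpace.single 3 1) := hsymm _ _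
  have s45 : h (EuclideanSpace.single 4 1) (EuclideanSpace.single 5 1) = h (EuclideanSpace.single 5 1) (EuclideanSpace.single 4 1) := hsymm _ _
  have z00 : h (EuclideanSpace.single 0 1) (EuclideanSpace.single 0 1) = 0 := by linarith [ev024, ev035, ev125, ev134, a00, a22, a44]
  have z11 : h (EuclideanSpace.single 1 1) (EuclideanSpace.single 1 1) = 0 := by linarith [ev024, ev035, ev125, ev134, a00, a22, a44]
  have z22 : h (EuclideanSpace.single 2 1) (EuclideanSpace.single 2 1) = 0 := by linarith [ev024, ev035, ev125, ev134, a00, a22, a44]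
  have z33 : h (EuclideanSpace.single 3 1) (EuclideanSpace.single 3 1) = 0 := by linarith [ev024, ev035, ev125, ev134, a00, a22, a44]
  have z44 : h (EuclideanSpace.single 4 1) (EuclideanSpace.single 4 1) = 0 := by linarith [ev024, ev035, ev125, ev134, a00, a22, a44]
  have z55 : h (EuclideanSpace.single 5 1) (EuclideanSpace.single 5 1) = 0 := by linarith [ev024, ev035, ev125, ev134, a00, a22, a44]
  have z05 : h (EuclideanSpace.single 0 1) (EuclideanSpace.single 5 1) = 0 := by linarith [ev012, a05, s14, s05]
  have z14 : h (EuclideanSpace.single 1 1) (EuclideanSpace.single 4 1) = 0 := by linarith [ev012, a05, s14, s05]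
  have z04 : h (EuclideanSpace.single 0 1) (EuclideanSpace.single 4 1) = 0 := by linarith [ev013, a04, s04, s15]
  have z15 : h (EuclideanSpace.single 1 1) (EuclideanSpace.single 5 1) = 0 := by linarith [ev013, a04, s04, s15]
  have z03 : h (EuclideanSpace.single 0 1) (EuclideanSpace.single 3 1) = 0 := by linarith [ev014, a03, s03, s12]
  have z12 : h (EuclideanSpace.single 1 1) (EuclideanSpace.single 2 1) = 0 := by linarith [ev014, a03, s03, s12]
  have z02 : h (EuclideanSpace.single 0 1) (EuclideanSpace.single 2 1) = 0 := by linarith [ev015, a02, s02, s13]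
  have z13 : h (EuclideanSpace.single 1 1) (EuclideanSpace.single 3 1) = 0 := by linarith [ev015, a02, s02, s13]
  have z25 : h (EuclideanSpace.single 2 1) (EuclideanSpace.single 5 1) = 0 := by linarith [ev023, a25, s25, s34]
  have z34 : h (EuclideanSpace.single 3 1) (EuclideanSpace.single 4 1) = 0 := by linarith [ev023, a25, s25, s34]
  have z24 : h (EuclideanSpace.single 2 1) (EuclideanSpace.single 4 1) = 0 := by linarith [ev123, a24, s24, s35]
  have z35 : h (EuclideanSpace.single 3 1) (EuclideanSpace.single 5 1) = 0 := by linarith [ev123, a24, s24, s35]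
  have z01 : h (EuclideanSpace.single 0 1) (EuclideanSpace.single 1 1) = 0 := by linarith [ev025, ev034, ev135, a25, a24, s01, s23, s45]
  have z23 : h (EuclideanSpace.single 2 1) (EuclideanSpace.single 3 1) = 0 := by linarith [ev025, ev034, ev135, a25, a24, s01, s23, s45]
  have z45 : h (EuclideanSpace.single 4 1) (EuclideanSpace.single 5 1) = 0 := by linarith [ev025, ev034, ev135, a25, a24, s01, s23, s45]
  have key : ∀ i j : Fin 6, h (sb i) (sb j) = 0 := by
    intro i j
    fin_cases i <;> fin_cases j <;>
      first
      | exact z00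
      | exact z11
      | exact z22
      | exact z33
      | exact z44
      | exact z55
      | exact z05
      | exact (hsymm _ _).trans z05
      | exact z14
      | exact (hsymm _ _).trans z14
      | exact z04
      | exact (hsymm _ _).trans z04
      | exact z15
      | exact (hsymm _ _).trans z15
      | exact z03
      | exact (hsymm _ _).trans z03
      | exact z12
      | exact (hsymm _ _).trans z12
      | exact z02
      | exact (hsymm _ _).trans z02
      | exact z13
      | exact (hsymm _ _).trans z13
      | exact z25
      | exact (hsymm _ _).trans z25
      | exact z34
      | exact (hsymm _ _).trans z34
      | exact z24
      | exact (hsymm _ _).trans z24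
      | exact z35
      | exact (hsymm _ _).trans z35
      | exact z01
      | exact (hsymm _ _).trans z01
      | exact z23
      | exact (hsymm _ _).trans z23
      | exact z45
      | exact (hsymm _ _).trans z45
  apply Module.Basis.ext (EuclideanSpace.basisFun (Fin 6) ℝ).toBasis
  intro i
  apply Module.Basis.ext (EuclideanSpace.basisFun (Fin 6) ℝ).toBasis
  intro j
  simp only [OrthonormalBasis.coe_toBasis, EuclideanSpace.basisFun_apply,
    LinearMap.zero_apply]
  exact key i j
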